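/- Let D be a smooth DNNF covered by separators (with fixed collections 𝒮_i) and let a : ⟦x⟧ ∪ v → {0,1} be a d-consistent total assignment of the domain variables and the node variables. Then the following are equivalent: (i) the set of nodes v with a(v)=1 induces a minimal satisfying subtree of D; (ii) a satisfies ψ_c; (iii) a satisfies ψ_p. -/

import Mathlib

set_option autoImplicit false

universe u v

/-- A literal: a boolean variable together with a polarity. -/
structure Lit (V : Type u) where
  var : V
  pos : Bool

/-- The complementary literal. -/
def Lit.negate {V : Type u} (l : Lit V) : Lit V := ⟨l.var, !l.pos⟩

/-- A literal is satisfied by a total assignment. -/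
def Lit.eval {V : Type u} (a : V → Bool) (l : Lit V) : Prop := a l.var = l.pos

/-- A clause is a (finite in all our uses) disjunction of a set of literals. -/
abbrev Clause (V : Type u) := Set (Lit V)

/-- A CNF formula is a conjunction of a set of clauses. -/
abbrev CNF (V : Type u) := Set (Clause V)

/-- A clause is satisfied iff some of its literals is. -/
def Clause.Sat {V : Type u} (a : V → Bool) (C : Clause V) : Prop := ∃ l ∈ C, Lit.eval a l

/-- A CNF formula is satisfied iff all of its clauses are. -/
def CNF.Sat {V : Type u} (a : V → Bool) (φ : CNF V) : Prop := ∀ C ∈ φ, Clause.Sat a C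

def CNF.Satisfiable {V : Type u} (φ : CNF V) : Prop := ∃ a : V → Bool, CNF.Sat a φ

/-- `φ ⊨ l`. -/
def CNF.Entails {V : Type u} (φ : CNF V) (l : Lit V) : Prop :=
  ∀ a : V → Bool, CNF.Sat a φ → Lit.eval a l

/-- A partial assignment, i.e. a set of literals, is consistent if it contains
no complementary pair of literals. -/
def ConsistentPA {V : Type u} (α : Set (Lit V)) : Prop := ∀ l ∈ α, Lit.negate l ∉ α

/-- The set of unit clauses corresponding to a partial assignment `α`;
`φ ∪ paUnits α` represents `φ ∧ α`. -/
def paUnits {V : Type u} (α : Set (Lit V)) : CNF V := (fun l => ({l} : Clause V)) '' α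

/-- Derivability by repeated unit resolution: from a clause `C ∋ l` and the unit
clause `¬l` derive `C \ {l}`.  `UnitDeriv φ ∅` means `φ ⊢₁ ⊥` and
`UnitDeriv φ {l}` means `φ ⊢₁ l`. -/
inductive UnitDeriv {V : Type u} (φ : CNF V) : Clause V → Prop where
  | base {C : Clause V} : C ∈ φ → UnitDeriv φ C
  | step {C : Clause V} (l : Lit V) : l ∈ C → UnitDeriv φ C →
      UnitDeriv φ {Lit.negate l} → UnitDeriv φ (C \ {l})

/-- The set of variables occurring in a CNF formula. -/
def CNF.vars {V : Type u} (φ : CNF V) : Set V := ⋃ C ∈ φ, Lit.var '' C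

/-- All literals of `α` are literals on the variables `W`. -/
def LitsOn {V : Type u} (α : Set (Lit V)) (W : Set V) : Prop := ∀ l ∈ α, l.var ∈ W

/-- `φ` is unit refutation complete on the variables `W`. -/
def URCon {V : Type u} (φ : CNF V) (W : Set V) : Prop :=
  ∀ α : Set (Lit V), ConsistentPA α → LitsOn α W →
    ¬ CNF.Satisfiable (φ ∪ paUnits α) → UnitDeriv (φ ∪ paUnits α) ∅

/-- `φ` is propagation complete on the variables `W`. -/
def PCon {V : Type u} (φ : CNF V) (W : Set V) : Prop :=
  ∀ α : Set (Lit V), ConsistentPA α → LitsOn α W →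
    ∀ l : Lit V, l.var ∈ W → CNF.Entails (φ ∪ paUnits α) l →
      UnitDeriv (φ ∪ paUnits α) {l} ∨ UnitDeriv (φ ∪ paUnits α) ∅

/-- `φ` is a CNF encoding of the function `f` with input variables `X`
(the remaining variables of `φ` being auxiliary); `f` is assumed to depend
only on the values of the variables in `X`. -/
def IsEncodingOn {V : Type u} (φ : CNF V) (X : Set V) (f : (V → Bool) → Prop) : Prop :=
  ∀ a : V → Bool, f a ↔ ∃ b : V → Bool, (∀ x ∈ X, b x = a x) ∧ CNF.Sat b φ

/-- The positive literal on a variable. -/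
def posL {V : Type u} (x : V) : Lit V := ⟨x, true⟩
/-- The negative literal on a variable. -/
def negL {V : Type u} (x : V) : Lit V := ⟨x, false⟩

/-! ## Smooth DNNFs over variables with finite domains -/

/-- The label of a node of an NNF: an ∧-node, an ∨-node, or a leaf labeled
with the domain variable `⟦x_i = s⟧`. -/
inductive NLabel (n : ℕ) : Type where
  | And : NLabel n
  | Or : NLabel n
  | Leaf : Fin n → ℕ → NLabel n

/-- An NNF: a rooted DAG whose inner nodes are labeled `∧` or `∨` and whose
leaves are labeled with domain variables `⟦x_i = s⟧` (`s ∈ Dom i`) of the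
variables `x₁, …, xₙ` with finite domains `Dom i`.  The edge `edge v u` means
that `u` is a child (an input) of `v`.  Well-formedness conditions are
collected in `NNF.WF`. -/
structure NNF : Type 1 where
  /-- the nodes -/
  N : Type
  /-- `edge v u`: there is an edge from `v` to its child `u` -/
  edge : N → N → Prop
  /-- the root -/
  root : N
  /-- the number of variables -/
  n : ℕ
  /-- the (finite, non-empty) domains of the variables -/
  Dom : Fin n → Set ℕ
  /-- the label of each node -/
  label : N → NLabel n

namespace NNF

/-- Reachability along directed edges. -/
def Reach (D : NNF) (v u : D.N) : Prop := Relation.ReflTransGen D.edge v u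

/-- `var(v)`: the set of variables `x_i` such that a leaf labeled with a domain
variable of `x_i` is reachable from `v`. -/
def varsOf (D : NNF) (v : D.N) : Set (Fin D.n) :=
  {i | ∃ u s, D.Reach v u ∧ D.label u = NLabel.Leaf i s}

/-- `v` is a leaf. -/
def IsLeaf (D : NNF) (v : D.N) : Prop := ∃ i s, D.label v = NLabel.Leaf i s

/-- `H_i`: the set of nodes `v` with `x_i ∈ var(v)`; the subgraph of `D`
induced on `H_i` is `D_i`. -/
def H (D : NNF) (i : Fin D.n) : Set D.N := {v | i ∈ D.varsOf v}

/-- `L_i`: the set of leaves labeled with domain variables of `x_i`. -/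
def Lset (D : NNF) (i : Fin D.n) : Set D.N := {v | ∃ s, D.label v = NLabel.Leaf i s}

/-- Well-formedness of an NNF: the domains are non-empty; the edge relation is
well-founded (the DAG is acyclic); leaves are labeled with domain variables
(`s ∈ Dom i`) and have no outgoing edges; each domain variable labels at most
one leaf; every node is reachable from the root; for each `i` at least one
domain variable of `x_i` labels a leaf; and every node has a leaf below it
(no node represents a constant). -/
def WF (D : NNF) : Prop :=
  (∀ i, (D.Dom i).Nonempty) ∧
  WellFounded (fun u v : D.N => D.edge v u) ∧
  (∀ v i s, D.label v = NLabel.Leaf i s → s ∈ D.Dom i) ∧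
  (∀ v i s, D.label v = NLabel.Leaf i s → ∀ u, ¬ D.edge v u) ∧
  (∀ v w i s, D.label v = NLabel.Leaf i s → D.label w = NLabel.Leaf i s → v = w) ∧
  (∀ v, D.Reach D.root v) ∧
  (∀ i, ∃ v s, D.label v = NLabel.Leaf i s) ∧
  (∀ v, ∃ i, i ∈ D.varsOf v)

/-- Decomposability: the children of every ∧-node have pairwise disjoint sets
of variables. -/
def Decomposable (D : NNF) : Prop :=
  ∀ v, D.label v = NLabel.And →
    ∀ u₁ u₂, D.edge v u₁ → D.edge v u₂ → u₁ ≠ u₂ →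
      Disjoint (D.varsOf u₁) (D.varsOf u₂)

/-- Smoothness: every child of an ∨-node `v` has the same variables as `v`. -/
def Smooth (D : NNF) : Prop :=
  ∀ v u, D.label v = NLabel.Or → D.edge v u → D.varsOf u = D.varsOf v

/-- A node of `D` evaluates to `true` under the assignment `a` of the domain
variables, where the children are taken with respect to the edge relation `E`
(this generality is used when edges are removed from `D`). -/
inductive EvalWith (D : NNF) (E : D.N → D.N → Prop) (a : Fin D.n × ℕ → Bool) : D.N → Prop where
  | leaf {v : D.N} {i : Fin D.n} {s : ℕ} :
      D.label v = NLabel.Leaf i s → a (i, s) = true → EvalWith D E a v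
  | and {v : D.N} : D.label v = NLabel.And →
      (∀ u, E v u → EvalWith D E a u) → EvalWith D E a v
  | or {v u : D.N} : D.label v = NLabel.Or → E v u →
      EvalWith D E a u → EvalWith D E a v

/-- A node of `D` evaluates to `true` under the assignment `a`. -/
def EvalTrue (D : NNF) (a : Fin D.n × ℕ → Bool) (v : D.N) : Prop :=
  D.EvalWith D.edge a v

/-- `f_D(⟦x⟧)`: the monotone boolean function of the domain variables computed
by `D`. -/
def fD (D : NNF) (a : Fin D.n × ℕ → Bool) : Prop := D.EvalTrue a D.root

/-- The direct encoding constraints: for each `i` exactly one domain variable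
of `x_i` is true. -/
def DConsistent (D : NNF) (a : Fin D.n × ℕ → Bool) : Prop :=
  ∀ i, ∃! s, s ∈ D.Dom i ∧ a (i, s) = true

/-- `f_D'(⟦x⟧)`: the conjunction of `f_D` and the direct encoding constraints. -/
def fD' (D : NNF) (a : Fin D.n × ℕ → Bool) : Prop := D.fD a ∧ D.DConsistent a

/-- A subgraph of `D`: a set of nodes together with a set of edges of `D`
between them. -/
structure Subgraph (D : NNF) : Type where
  mem : Set D.N
  tedge : D.N → D.N → Prop
  le_edge : ∀ {v u}, tedge v u → D.edge v u
  mem_left : ∀ {v u}, tedge v u → v ∈ mem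
  mem_right : ∀ {v u}, tedge v u → u ∈ mem

/-- A minimal satisfying subtree of `D`: a rooted subtree (out-arborescence)
of `D` whose root is the root of `D`, which contains all the `D`-edges out of
each of its ∧-nodes and exactly one `D`-edge out of each of its ∨-nodes. -/
def IsMST (D : NNF) (T : D.Subgraph) : Prop :=
  D.root ∈ T.mem ∧
  (∀ v ∈ T.mem, Relation.ReflTransGen T.tedge D.root v) ∧
  (∀ v ∈ T.mem, v ≠ D.root → ∃! u, T.tedge u v) ∧
  (∀ u, ¬ T.tedge u D.root) ∧
  (∀ v ∈ T.mem, D.label v = NLabel.And → ∀ u, D.edge v u → T.tedge v u) ∧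
  (∀ v ∈ T.mem, D.label v = NLabel.Or → ∃! u, T.tedge v u)

/-- `β_T`: the total assignment of the domain variables that sets to `1`
exactly the domain variables labeling the leaves of `T`. -/
noncomputable def beta (D : NNF) (T : D.Subgraph) : Fin D.n × ℕ → Bool :=
  fun p => @decide (∃ v ∈ T.mem, D.label v = NLabel.Leaf p.1 p.2)
    (Classical.propDecidable _)

/-- A root-to-leaf path in `D_i` (the subgraph of `D` induced on `H_i`),
represented by the list of its nodes. -/
def IsRLPath (D : NNF) (i : Fin D.n) (p : List D.N) : Prop :=
  p ≠ [] ∧ (∀ v ∈ p, v ∈ D.H i) ∧ List.Chain' D.edge p ∧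
  p.head? = some D.root ∧ ∃ t, p.getLast? = some t ∧ t ∈ D.Lset i

/-- A separator in `D_i`: a set `S ⊆ H_i` such that every path in `D_i` from
the root to a leaf contains precisely one node of `S`. -/
def IsSeparator (D : NNF) (i : Fin D.n) (S : Set D.N) : Prop :=
  S ⊆ D.H i ∧ ∀ p, D.IsRLPath i p → ∃! w, w ∈ p ∧ w ∈ S

/-- `D` is covered by the collections `𝒮 i` of separators: each `S ∈ 𝒮 i` is a
separator in `D_i` and the union of `𝒮 i` is `H_i ∖ {ρ}`. -/
def CoveredBy (D : NNF) (𝒮 : ∀ _ : Fin D.n, Set (Set D.N)) : Prop :=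
  ∀ i, (∀ S ∈ 𝒮 i, D.IsSeparator i S) ∧ ⋃₀ 𝒮 i = D.H i \ {D.root}

/-- `D` can be covered by separators. -/
def Covered (D : NNF) : Prop := ∃ 𝒮, D.CoveredBy 𝒮

end NNF

namespace NNF

/-- The variables of the encodings of `D`: `Sum.inl (i, s)` is the domain
variable `⟦x_i = s⟧` and `Sum.inr v` is the boolean variable of the inner node
`v`.  Leaf nodes are identified with the domain variables labeling them via
`NNF.nvar`. -/
abbrev EVar (D : NNF) : Type := (Fin D.n × ℕ) ⊕ D.N

/-- The variable of a node of `D`: a leaf is identified with the domain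
variable labeling it, an inner node is a variable of its own. -/
def nvar (D : NNF) (v : D.N) : D.EVar :=
  match D.label v with
  | NLabel.Leaf i s => Sum.inl (i, s)
  | NLabel.And => Sum.inr v
  | NLabel.Or => Sum.inr v

/-- Group N1: `v → v₁ ∨ … ∨ v_k` for each ∨-node `v` with children
`v₁, …, v_k`. -/
def grpN1 (D : NNF) : CNF D.EVar :=
  {C | ∃ v, D.label v = NLabel.Or ∧
    C = insert (negL (D.nvar v)) {l | ∃ u, D.edge v u ∧ l = posL (D.nvar u)}}

/-- Group N2: `v → v_i` for each ∧-node `v` and each child `v_i` of `v`. -/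
def grpN2 (D : NNF) : CNF D.EVar :=
  {C | ∃ v u, D.label v = NLabel.And ∧ D.edge v u ∧
    C = ({negL (D.nvar v), posL (D.nvar u)} : Clause D.EVar)}

/-- Group N3: `v → p₁ ∨ … ∨ p_k` for each non-root node `v` with predecessors
`p₁, …, p_k`. -/
def grpN3 (D : NNF) : CNF D.EVar :=
  {C | ∃ v, v ≠ D.root ∧
    C = insert (negL (D.nvar v)) {l | ∃ p, D.edge p v ∧ l = posL (D.nvar p)}}

/-- Group N4: the unit clause `¬l` for each domain variable `l = ⟦x_i = s⟧`
(`s ∈ Dom i`) that is not a leaf of `D`. -/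
def grpN4 (D : NNF) : CNF D.EVar :=
  {C | ∃ i s, s ∈ D.Dom i ∧ (∀ v, D.label v ≠ NLabel.Leaf i s) ∧
    C = ({negL (Sum.inl (i, s))} : Clause D.EVar)}

/-- Group N5: `amo*(S)` for each separator `S ∈ 𝒮 i` and each `i`, i.e. all
the clauses `¬u ∨ ¬w` for distinct `u, w ∈ S`. -/
def grpN5 (D : NNF) (𝒮 : ∀ _ : Fin D.n, Set (Set D.N)) : CNF D.EVar :=
  {C | ∃ i, ∃ S ∈ 𝒮 i, ∃ u ∈ S, ∃ w ∈ S, u ≠ w ∧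
    C = ({negL (D.nvar u), negL (D.nvar w)} : Clause D.EVar)}

/-- Group N6: `eo*(S)` for each separator `S ∈ 𝒮 i` and each `i`, i.e.
`amo*(S)` together with the clause `∨_{u ∈ S} u`. -/
def grpN6 (D : NNF) (𝒮 : ∀ _ : Fin D.n, Set (Set D.N)) : CNF D.EVar :=
  D.grpN5 𝒮 ∪ {C | ∃ i, ∃ S ∈ 𝒮 i, C = {l | ∃ u ∈ S, l = posL (D.nvar u)}}

/-- The formula `ψ_c`: the clauses of groups N1–N4 and N5 together with the
unit clause `ρ`. -/
def psiC (D : NNF) (𝒮 : ∀ _ : Fin D.n, Set (Set D.N)) : CNF D.EVar :=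
  D.grpN1 ∪ D.grpN2 ∪ D.grpN3 ∪ D.grpN4 ∪ D.grpN5 𝒮 ∪
    {({posL (D.nvar D.root)} : Clause D.EVar)}

/-- The formula `ψ_p`: the clauses of groups N1–N4 and N6 together with the
unit clause `ρ`. -/
def psiP (D : NNF) (𝒮 : ∀ _ : Fin D.n, Set (Set D.N)) : CNF D.EVar :=
  D.grpN1 ∪ D.grpN2 ∪ D.grpN3 ∪ D.grpN4 ∪ D.grpN6 𝒮 ∪
    {({posL (D.nvar D.root)} : Clause D.EVar)}

/-- The subgraph of `D` induced by a set of nodes. -/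
def induced (D : NNF) (Sn : Set D.N) : D.Subgraph where
  mem := Sn
  tedge := fun v u => D.edge v u ∧ v ∈ Sn ∧ u ∈ Sn
  le_edge := fun h => h.1
  mem_left := fun h => h.2.1
  mem_right := fun h => h.2.2

/-- The input variables of the encodings: the domain variables `⟦x_i = s⟧`
for `s ∈ Dom i`. -/
def inputVars (D : NNF) : Set D.EVar :=
  {w | ∃ i s, s ∈ D.Dom i ∧ w = Sum.inl (i, s)}

/-- The auxiliary variables of the encodings `ψ_c`, `ψ_p`: the variables of
the inner nodes of `D`. -/
def nodeVars (D : NNF) : Set D.EVar :=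
  {w | ∃ v, (D.label v = NLabel.And ∨ D.label v = NLabel.Or) ∧ w = Sum.inr v}

/-- `f_D'(⟦x⟧)` viewed as a function of assignments of the encoding
variables (it depends only on the domain variables). -/
def fDE (D : NNF) (a : D.EVar → Bool) : Prop :=
  D.fD' (fun p => a (Sum.inl p))

end NNF



section PathHelpers

variable {α : Type} {R : α → α → Prop} {v t m : α} {p q : List α}

lemma aux_rtg_path (h : Relation.ReflTransGen R v t) :
    ∃ p : List α, p.head? = some v ∧ p.getLast? = some t ∧ p.Chain' R ∧
      ∀ x ∈ p, Relation.ReflTransGen R v x ∧ Relation.ReflTransGen R x t := by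
  induction h using Relation.ReflTransGen.head_induction_on with
  | refl =>
      refine ⟨[t], rfl, by simp, List.isChain_singleton t, ?_⟩
      intro x hx
      rcases List.mem_singleton.1 hx with rfl
      exact ⟨.refl, .refl⟩
  | head h' h ih =>
      obtain ⟨p, hh, hl, hc, hm⟩ := ih
      refine ⟨_ :: p, rfl, ?_, ?_, ?_⟩
      · cases p with
        | nil => simp at hh
        | cons b bs => rw [List.getLast?_cons_cons]; exact hl
      · refine List.isChain_cons.2 ⟨?_, hc⟩
        intro y hy
        rw [hh] at hy
        obtain rfl := Option.mem_some_iff.1 hy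
        exact h'
      · intro x hx
        rcases List.mem_cons.1 hx with rfl | hx
        · exact ⟨.refl, .head h' h⟩
        · exact ⟨.head h' (hm x hx).1, (hm x hx).2⟩

lemma aux_mem_of_head?_eq_some (h : p.head? = some v) : v ∈ p := by
  cases p with
  | nil => simp at h
  | cons c cs =>
      simp at h
      exact h ▸ List.mem_cons_self

lemma aux_path_glue (hph : p.head? = some v) (hpl : p.getLast? = some m)
    (hqh : q.head? = some m) (hql : q.getLast? = some t)
    (hpc : p.Chain' R) (hqc : q.Chain' R) :
    ∃ r : List α, r.head? = some v ∧ r.getLast? = some t ∧ r.Chain' R ∧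
      (∀ x ∈ r, x ∈ p ∨ x ∈ q) ∧ (∀ x ∈ p, x ∈ r) ∧ (∀ x ∈ q, x ∈ r) := by
  obtain ⟨q', rfl⟩ : ∃ q', q = m :: q' := by
    cases q with
    | nil => simp at hqh
    | cons c q' => exact ⟨q', by simp at hqh; rw [hqh]⟩
  cases q' with
  | nil =>
      refine ⟨p, hph, ?_, hpc, fun x hx => Or.inl hx, fun x hx => hx, ?_⟩
      · simp at hql; rw [hpl, hql]
      · intro x hx
        simp at hx
        subst hx
        exact List.mem_of_getLast? hpl
  | cons y ys =>
      refine ⟨p ++ y :: ys, ?_, ?_, ?_, ?_, ?_, ?_⟩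
      · cases p with
        | nil => simp at hph
        | cons c cs => simpa using hph
      · rw [List.getLast?_append_cons]
        rw [List.getLast?_cons_cons] at hql
        exact hql
      · refine List.IsChain.append hpc (List.isChain_cons.1 hqc).2 ?_
        intro x hx z hz
        rw [hpl] at hx
        obtain rfl := Option.mem_some_iff.1 hx
        exact (List.isChain_cons.1 hqc).1 z hz
      · intro x hx
        rcases List.mem_append.1 hx with hx | hx
        · exact Or.inl hx
        · exact Or.inr (List.mem_cons_of_mem _ hx)
      · intro x hx; exact List.mem_append_left _ hx
      · intro x hx
        rcases List.mem_cons.1 hx with rfl | hx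
        · exact List.mem_append_left _ (List.mem_of_getLast? hpl)
        · exact List.mem_append_right _ hx

lemma aux_path_join {m' : α} (hph : p.head? = some v) (hpl : p.getLast? = some m)
    (hqh : q.head? = some m') (hql : q.getLast? = some t)
    (hpc : p.Chain' R) (hqc : q.Chain' R) (hR : R m m') :
    ∃ r : List α, r.head? = some v ∧ r.getLast? = some t ∧ r.Chain' R ∧
      (∀ x ∈ r, x ∈ p ∨ x ∈ q) ∧ (∀ x ∈ p, x ∈ r) ∧ (∀ x ∈ q, x ∈ r) := by
  refine ⟨p ++ q, ?_, ?_, ?_, ?_, ?_, ?_⟩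
  · cases p with
    | nil => simp at hph
    | cons c cs => simpa using hph
  · obtain ⟨q', rfl⟩ : ∃ q', q = m' :: q' := by
      cases q with
      | nil => simp at hqh
      | cons c q' => exact ⟨q', by simp at hqh; rw [hqh]⟩
    rw [List.getLast?_append_cons]
    exact hql
  · refine List.IsChain.append hpc hqc ?_
    intro x hx z hz
    rw [hpl] at hx
    rw [hqh] at hz
    obtain rfl := Option.mem_some_iff.1 hx
    obtain rfl := Option.mem_some_iff.1 hz
    exact hR
  · intro x hx; exact List.mem_append.1 hx
  · intro x hx; exact List.mem_append_left _ hx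
  · intro x hx; exact List.mem_append_right _ hx

lemma aux_comparable (huniq : ∀ x y y', R y x → R y' x → y = y') {t u w : α}
    (h1 : Relation.ReflTransGen R u t) (h2 : Relation.ReflTransGen R w t) :
    Relation.ReflTransGen R u w ∨ Relation.ReflTransGen R w u := by
  induction h1 with
  | refl => exact Or.inr h2
  | @tail b c hb step ih =>
      rcases h2.cases_tail with rfl | ⟨c', hc', step'⟩
      · exact Or.inl (hb.tail step)
      · rw [huniq c c' b step' step] at hc'
        exact ih hc'

end PathHelpers

namespace NNF

variable {D : NNF}

/-- `TE M`: the edge relation of the subgraph induced on `M`. -/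
def auxTE (D : NNF) (M : Set D.N) (v u : D.N) : Prop := D.edge v u ∧ v ∈ M ∧ u ∈ M

lemma aux_not_transGen_self (hwf : D.WF) (v : D.N) : ¬ Relation.TransGen D.edge v v := by
  intro h
  exact ((hwf.2.1.transGen).isIrrefl).irrefl v
    ((Relation.transGen_swap (r := fun u v : D.N => D.edge v u)).1 h)

lemma aux_reach_edge_false (hwf : D.WF) {u v : D.N} (h : D.Reach u v) (he : D.edge v u) :
    False := aux_not_transGen_self hwf u (Relation.TransGen.tail' h he)

lemma aux_reach_antisymm (hwf : D.WF) {u v : D.N} (h1 : D.Reach u v) (h2 : D.Reach v u) :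
    u = v := by
  by_contra hne
  rcases h1.cases_head with rfl | ⟨c, hc, hcv⟩
  · exact hne rfl
  · exact aux_not_transGen_self hwf u
      (Relation.TransGen.trans_left (Relation.TransGen.head' hc hcv) h2)

lemma aux_no_edge_to_root (hwf : D.WF) {u : D.N} (h : D.edge u D.root) : False :=
  aux_reach_edge_false hwf (hwf.2.2.2.2.2.1 u) h

lemma aux_mem_varsOf_root (hwf : D.WF) (i : Fin D.n) : i ∈ D.varsOf D.root := by
  obtain ⟨v, s, hv⟩ := hwf.2.2.2.2.2.2.1 i
  exact ⟨v, s, hwf.2.2.2.2.2.1 v, hv⟩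

lemma aux_varsOf_of_reach {x y : D.N} {i : Fin D.n} (h : D.Reach x y)
    (hy : i ∈ D.varsOf y) : i ∈ D.varsOf x := by
  obtain ⟨u, s, hr, hl⟩ := hy
  exact ⟨u, s, h.trans hr, hl⟩

lemma aux_nvar_leaf {v : D.N} {i : Fin D.n} {s : ℕ} (h : D.label v = NLabel.Leaf i s) :
    D.nvar v = Sum.inl (i, s) := by
  unfold NNF.nvar
  rw [h]

lemma aux_te_reach {M : Set D.N} {x y : D.N} (h : Relation.ReflTransGen (D.auxTE M) x y) :
    D.Reach x y := Relation.ReflTransGen.mono (r := D.auxTE M) (p := D.edge) (fun _ _ hh => hh.1) _ _ h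

lemma aux_te_reach_mem {M : Set D.N} {v x : D.N} (hv : v ∈ M)
    (h : Relation.ReflTransGen (D.auxTE M) v x) : x ∈ M := by
  rcases h.cases_tail with rfl | ⟨y, _, hy⟩
  · exact hv
  · exact hy.2.2

lemma aux_descend (hwf : D.WF) (hsm : D.Smooth) {M : Set D.N}
    (hAnd : ∀ v ∈ M, D.label v = NLabel.And → ∀ u, D.edge v u → u ∈ M)
    (hOr : ∀ v ∈ M, D.label v = NLabel.Or → ∃ u, D.edge v u ∧ u ∈ M)
    {i : Fin D.n} : ∀ v, v ∈ M → i ∈ D.varsOf v →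
    ∃ t s, D.label t = NLabel.Leaf i s ∧ Relation.ReflTransGen (D.auxTE M) v t := by
  intro v
  induction v using (hwf.2.1).induction with
  | _ v ih =>
    intro hv hi
    obtain ⟨u, s, hr, hl⟩ := hi
    cases hlv : D.label v with
    | Leaf j s' =>
        rcases hr.cases_head with rfl | ⟨w, hw, _⟩
        · exact ⟨v, s, hl, .refl⟩
        · exact absurd hw (hwf.2.2.2.1 v j s' hlv w)
    | And =>
        rcases hr.cases_head with rfl | ⟨w, hw, hwu⟩
        · rw [hlv] at hl; cases hl
        · have hwM := hAnd v hv hlv w hw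
          obtain ⟨t, s'', ht, hp⟩ := ih w hw hwM ⟨u, s, hwu, hl⟩
          exact ⟨t, s'', ht, .head ⟨hw, hv, hwM⟩ hp⟩
    | Or =>
        obtain ⟨w, hw, hwM⟩ := hOr v hv hlv
        have hiw : i ∈ D.varsOf w := by
          rw [hsm v w hlv hw]; exact ⟨u, s, hr, hl⟩
        obtain ⟨t, s'', ht, hp⟩ := ih w hw hwM hiw
        exact ⟨t, s'', ht, .head ⟨hw, hv, hwM⟩ hp⟩

lemma aux_leaf_unique (hwf : D.WF) {a : D.EVar → Bool}
    (hdc : ∀ i, ∃! s, s ∈ D.Dom i ∧ a (Sum.inl (i, s)) = true)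
    {i : Fin D.n} {t t' : D.N} {s s' : ℕ}
    (ht : D.label t = NLabel.Leaf i s) (ht' : D.label t' = NLabel.Leaf i s')
    (hat : a (D.nvar t) = true) (hat' : a (D.nvar t') = true) : t = t' := by
  obtain ⟨s0, _, huniq⟩ := hdc i
  rw [aux_nvar_leaf ht] at hat
  rw [aux_nvar_leaf ht'] at hat'
  have hs : s = s0 := huniq s ⟨hwf.2.2.1 t i s ht, hat⟩
  have hs' : s' = s0 := huniq s' ⟨hwf.2.2.1 t' i s' ht', hat'⟩
  exact hwf.2.2.2.2.1 t t' i s0 (hs ▸ ht) (hs' ▸ ht')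

/-- Build a root-to-leaf RL-path in `D_i` from an `auxTE`-path `root ⇝ t`. -/
lemma aux_mkRL1 {M : Set D.N} (hroot : D.root ∈ M) {i : Fin D.n} {s : ℕ} {t : D.N}
    (h : Relation.ReflTransGen (D.auxTE M) D.root t) (hts : D.label t = NLabel.Leaf i s) :
    ∃ p, D.IsRLPath i p ∧ ∀ x ∈ p, x ∈ M ∧ Relation.ReflTransGen (D.auxTE M) D.root x ∧
      Relation.ReflTransGen (D.auxTE M) x t := by
  obtain ⟨p, hh, hl, hc, hm⟩ := aux_rtg_path h
  refine ⟨p, ⟨?_, ?_, ?_, hh, t, hl, s, hts⟩, ?_⟩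
  · rintro rfl; simp at hh
  · intro x hx
    exact ⟨t, s, aux_te_reach (hm x hx).2, hts⟩
  · exact hc.imp (fun _ _ hh' => hh'.1)
  · intro x hx
    exact ⟨aux_te_reach_mem hroot (hm x hx).1, (hm x hx).1, (hm x hx).2⟩

/-- Build an RL-path through `v` and its child `w`. -/
lemma aux_mkRL3 {M : Set D.N} (hroot : D.root ∈ M) {i : Fin D.n} {s : ℕ} {v w t : D.N}
    (h1 : Relation.ReflTransGen (D.auxTE M) D.root v) (h2 : D.auxTE M v w)
    (h3 : Relation.ReflTransGen (D.auxTE M) w t) (hts : D.label t = NLabel.Leaf i s) :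
    ∃ p, D.IsRLPath i p ∧ v ∈ p ∧ w ∈ p ∧
      ∀ x ∈ p, x ∈ M ∧ (Relation.ReflTransGen (D.auxTE M) x v ∨
        Relation.ReflTransGen (D.auxTE M) w x) := by
  obtain ⟨p1, h1h, h1l, h1c, h1m⟩ := aux_rtg_path h1
  obtain ⟨p3, h3h, h3l, h3c, h3m⟩ := aux_rtg_path h3
  obtain ⟨r, hrh, hrl, hrc, hrm, hrp, hrq⟩ := aux_path_join h1h h1l h3h h3l h1c h3c h2
  have hreachT : ∀ x ∈ r, Relation.ReflTransGen (D.auxTE M) x t := by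
    intro x hx
    rcases hrm x hx with hx1 | hx3
    · exact ((h1m x hx1).2.trans (Relation.ReflTransGen.head h2 h3))
    · exact (h3m x hx3).2
  refine ⟨r, ⟨?_, ?_, ?_, hrh, t, hrl, s, hts⟩, hrp v (List.mem_of_getLast? h1l),
    hrq w (aux_mem_of_head?_eq_some h3h), ?_⟩
  · rintro rfl; simp at hrh
  · intro x hx
    exact ⟨t, s, aux_te_reach (hreachT x hx), hts⟩
  · exact hrc.imp (fun _ _ hh' => hh'.1)
  · intro x hx
    rcases hrm x hx with hx1 | hx3
    · exact ⟨aux_te_reach_mem hroot (h1m x hx1).1, Or.inl (h1m x hx1).2⟩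
    · exact ⟨aux_te_reach_mem h2.2.2 (h3m x hx3).1, Or.inr (h3m x hx3).1⟩

/-- Build an RL-path through `u` and its descendant `w`. -/
lemma aux_mkRL2 {M : Set D.N} (hroot : D.root ∈ M) {i : Fin D.n} {s : ℕ} {u w t : D.N}
    (h1 : Relation.ReflTransGen (D.auxTE M) D.root u)
    (h2 : Relation.ReflTransGen (D.auxTE M) u w)
    (h3 : Relation.ReflTransGen (D.auxTE M) w t) (hts : D.label t = NLabel.Leaf i s) :
    ∃ p, D.IsRLPath i p ∧ u ∈ p ∧ w ∈ p := by
  obtain ⟨p1, h1h, h1l, h1c, h1m⟩ := aux_rtg_path h1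
  obtain ⟨p2, h2h, h2l, h2c, h2m⟩ := aux_rtg_path h2
  obtain ⟨p3, h3h, h3l, h3c, h3m⟩ := aux_rtg_path h3
  obtain ⟨r0, hr0h, hr0l, hr0c, hr0m, hr0p, hr0q⟩ := aux_path_glue h1h h1l h2h h2l h1c h2c
  obtain ⟨r, hrh, hrl, hrc, hrm, hrp, hrq⟩ := aux_path_glue hr0h hr0l h3h h3l hr0c h3c
  have hreachT : ∀ x ∈ r, Relation.ReflTransGen (D.auxTE M) x t := by
    intro x hx
    rcases hrm x hx with hx0 | hx3
    · rcases hr0m x hx0 with hx1 | hx2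
      · exact (h1m x hx1).2.trans (h2.trans h3)
      · exact (h2m x hx2).2.trans h3
    · exact (h3m x hx3).2
  refine ⟨r, ⟨?_, ?_, ?_, hrh, t, hrl, s, hts⟩,
    hrp _ (hr0p u (List.mem_of_getLast? h1l)),
    hrp _ (hr0q w (List.mem_of_getLast? h2l))⟩
  · rintro rfl; simp at hrh
  · intro x hx
    exact ⟨t, s, aux_te_reach (hreachT x hx), hts⟩
  · exact hrc.imp (fun _ _ hh' => hh'.1)

/-- The key hitting lemma: if `a` satisfies the amo constraints of the
separators and all nodes of an RL-path `p` in `D_i` are true, then every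
non-root true node of `H_i` lies on `p`. -/
lemma aux_key_hit {𝒮 : ∀ _ : Fin D.n, Set (Set D.N)} (hcov : D.CoveredBy 𝒮)
    {a : D.EVar → Bool}
    (hamo : ∀ i : Fin D.n, ∀ S ∈ 𝒮 i, ∀ u ∈ S, ∀ w ∈ S, u ≠ w →
      a (D.nvar u) = true → a (D.nvar w) = true → False)
    {i : Fin D.n} {p : List D.N} {x : D.N} (hx : x ∈ D.H i) (hxr : x ≠ D.root)
    (hxM : a (D.nvar x) = true) (hp : D.IsRLPath i p)
    (hpM : ∀ y ∈ p, a (D.nvar y) = true) : x ∈ p := by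
  have hxU : x ∈ ⋃₀ 𝒮 i := by
    rw [(hcov i).2]
    exact ⟨hx, hxr⟩
  obtain ⟨S, hS, hxS⟩ := hxU
  obtain ⟨z, ⟨hzp, hzS⟩, _⟩ := ((hcov i).1 S hS).2 p hp
  by_cases hzx : z = x
  · exact hzx ▸ hzp
  · exact absurd hxM (fun h => hamo i S hS z hzS x hxS hzx (hpM z hzp) h)

end NNF

/-- Let `D` be a smooth DNNF covered by the separator
collections `𝒮_i` and let `a` be a d-consistent total assignment of the
domain variables and the node variables.  Then the following are equivalent:
(i) the set of nodes `v` with `a(v) = 1` induces a minimal satisfying subtree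
of `D`; (ii) `a` satisfies `ψ_c`; (iii) `a` satisfies `ψ_p`. -/
theorem stmt13 (D : NNF) (hwf : D.WF) (hdec : D.Decomposable) (hsm : D.Smooth)
    (𝒮 : ∀ _ : Fin D.n, Set (Set D.N)) (hcov : D.CoveredBy 𝒮)
    (a : D.EVar → Bool)
    (hdc : ∀ i, ∃! s, s ∈ D.Dom i ∧ a (Sum.inl (i, s)) = true) :
    (D.IsMST (D.induced {v | a (D.nvar v) = true}) ↔ CNF.Sat a (D.psiC 𝒮)) ∧
    (CNF.Sat a (D.psiC 𝒮) ↔ CNF.Sat a (D.psiP 𝒮)) := by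
  classical
  -- Block C : ψ_c ⇒ MST
  have blockC : CNF.Sat a (D.psiC 𝒮) → D.IsMST (D.induced {v | a (D.nvar v) = true}) := by
    intro hsat
    have hrootM : a (D.nvar D.root) = true := by
      obtain ⟨l, hl, he⟩ := hsat {posL (D.nvar D.root)} (Set.mem_union_right _ rfl)
      rcases hl with rfl
      exact he
    have hN1 : ∀ v, D.label v = NLabel.Or → a (D.nvar v) = true →
        ∃ u, D.edge v u ∧ a (D.nvar u) = true := by
      intro v hv hav
      have hCm : insert (negL (D.nvar v)) {l | ∃ u, D.edge v u ∧ l = posL (D.nvar u)}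
          ∈ D.psiC 𝒮 := by
        have h0 : insert (negL (D.nvar v)) {l | ∃ u, D.edge v u ∧ l = posL (D.nvar u)}
            ∈ D.grpN1 := ⟨v, hv, rfl⟩
        exact Set.mem_union_left _ (Set.mem_union_left _ (Set.mem_union_left _
          (Set.mem_union_left _ (Set.mem_union_left _ h0))))
      obtain ⟨l, hl, he⟩ := hsat _ hCm
      rcases Set.mem_insert_iff.1 hl with rfl | hl
      · exact absurd he (by simp [Lit.eval, negL, hav])
      · obtain ⟨u, hu, rfl⟩ := hl
        exact ⟨u, hu, he⟩
    have hN2 : ∀ v u, D.label v = NLabel.And → D.edge v u → a (D.nvar v) = true →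
        a (D.nvar u) = true := by
      intro v u hv he' hav
      have hCm : ({negL (D.nvar v), posL (D.nvar u)} : Clause D.EVar) ∈ D.psiC 𝒮 := by
        have h0 : ({negL (D.nvar v), posL (D.nvar u)} : Clause D.EVar) ∈ D.grpN2 :=
          ⟨v, u, hv, he', rfl⟩
        exact Set.mem_union_left _ (Set.mem_union_left _ (Set.mem_union_left _
          (Set.mem_union_left _ (Set.mem_union_right _ h0))))
      obtain ⟨l, hl, he⟩ := hsat _ hCm
      simp only [Set.mem_insert_iff, Set.mem_singleton_iff] at hl
      rcases hl with rfl | rfl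
      · exact absurd he (by simp [Lit.eval, negL, hav])
      · exact he
    have hN3 : ∀ v, v ≠ D.root → a (D.nvar v) = true →
        ∃ p, D.edge p v ∧ a (D.nvar p) = true := by
      intro v hv hav
      have hCm : insert (negL (D.nvar v)) {l | ∃ p, D.edge p v ∧ l = posL (D.nvar p)}
          ∈ D.psiC 𝒮 := by
        have h0 : insert (negL (D.nvar v)) {l | ∃ p, D.edge p v ∧ l = posL (D.nvar p)}
            ∈ D.grpN3 := ⟨v, hv, rfl⟩
        exact Set.mem_union_left _ (Set.mem_union_left _ (Set.mem_union_left _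
          (Set.mem_union_right _ h0)))
      obtain ⟨l, hl, he⟩ := hsat _ hCm
      rcases Set.mem_insert_iff.1 hl with rfl | hl
      · exact absurd he (by simp [Lit.eval, negL, hav])
      · obtain ⟨p, hp, rfl⟩ := hl
        exact ⟨p, hp, he⟩
    have hamo : ∀ i : Fin D.n, ∀ S ∈ 𝒮 i, ∀ u ∈ S, ∀ w ∈ S, u ≠ w →
        a (D.nvar u) = true → a (D.nvar w) = true → False := by
      intro i S hS u huS w hwS hne hu hw
      have hCm : ({negL (D.nvar u), negL (D.nvar w)} : Clause D.EVar) ∈ D.psiC 𝒮 := by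
        have h0 : ({negL (D.nvar u), negL (D.nvar w)} : Clause D.EVar) ∈ D.grpN5 𝒮 :=
          ⟨i, S, hS, u, huS, w, hwS, hne, rfl⟩
        exact Set.mem_union_left _ (Set.mem_union_right _ h0)
      obtain ⟨l, hl, he⟩ := hsat _ hCm
      simp only [Set.mem_insert_iff, Set.mem_singleton_iff] at hl
      rcases hl with rfl | rfl
      · exact absurd he (by simp [Lit.eval, negL, hu])
      · exact absurd he (by simp [Lit.eval, negL, hw])
    have hAnd : ∀ v ∈ ({v | a (D.nvar v) = true} : Set D.N), D.label v = NLabel.And →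
        ∀ u, D.edge v u → u ∈ ({v | a (D.nvar v) = true} : Set D.N) :=
      fun v hv hl u he => hN2 v u hl he hv
    have hOr : ∀ v ∈ ({v | a (D.nvar v) = true} : Set D.N), D.label v = NLabel.Or →
        ∃ u, D.edge v u ∧ u ∈ ({v | a (D.nvar v) = true} : Set D.N) :=
      fun v hv hl => hN1 v hl hv
    have hdesc := fun {i : Fin D.n} => NNF.aux_descend hwf hsm hAnd hOr (i := i)
    have hreach : ∀ v, a (D.nvar v) = true →
        Relation.ReflTransGen (D.auxTE {v | a (D.nvar v) = true}) D.root v := by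
      intro v hv
      by_cases hvr : v = D.root
      · subst hvr; exact .refl
      · obtain ⟨i, hi⟩ := hwf.2.2.2.2.2.2.2 v
        obtain ⟨t, s, hts, hpt⟩ := hdesc D.root hrootM (NNF.aux_mem_varsOf_root hwf i)
        obtain ⟨p, hrl, hmem⟩ := NNF.aux_mkRL1 hrootM hpt hts
        have hvP := NNF.aux_key_hit hcov hamo hi hvr hv hrl (fun y hy => (hmem y hy).1)
        exact (hmem v hvP).2.1
    have haux3 : ∀ v pp qq, a (D.nvar v) = true → a (D.nvar pp) = true →
        a (D.nvar qq) = true → D.edge pp v → D.edge qq v → pp ≠ D.root → D.Reach pp qq := by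
      intro v pp qq hv hp hq hep heq hpr
      obtain ⟨i, hi⟩ := hwf.2.2.2.2.2.2.2 v
      obtain ⟨t, s, hts, hvt⟩ := hdesc v hv hi
      obtain ⟨P, hrl, _, _, hmem⟩ := NNF.aux_mkRL3 hrootM (hreach qq hq) ⟨heq, hq, hv⟩ hvt hts
      have hpH : i ∈ D.varsOf pp := NNF.aux_varsOf_of_reach (Relation.ReflTransGen.single hep) hi
      have hpP := NNF.aux_key_hit hcov hamo hpH hpr hp hrl (fun y hy => (hmem y hy).1)
      rcases (hmem pp hpP).2 with hpq | hvp
      · exact NNF.aux_te_reach hpq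
      · exact absurd hep (fun he => NNF.aux_reach_edge_false hwf (NNF.aux_te_reach hvp) he)
    have huniqpar : ∀ v pp qq, a (D.nvar v) = true → D.edge pp v → D.edge qq v →
        a (D.nvar pp) = true → a (D.nvar qq) = true → pp = qq := by
      intro v pp qq hv hep heq hp hq
      by_cases hpr : pp = D.root
      · by_cases hqr : qq = D.root
        · rw [hpr, hqr]
        · exfalso
          have h1 := haux3 v qq pp hv hq hp heq hep hqr
          rw [hpr] at h1
          exact hqr (NNF.aux_reach_antisymm hwf h1 (hwf.2.2.2.2.2.1 qq))
      · by_cases hqr : qq = D.root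
        · exfalso
          have h1 := haux3 v pp qq hv hp hq hep heq hpr
          rw [hqr] at h1
          exact hpr (NNF.aux_reach_antisymm hwf h1 (hwf.2.2.2.2.2.1 pp))
        · exact NNF.aux_reach_antisymm hwf (haux3 v pp qq hv hp hq hep heq hpr)
            (haux3 v qq pp hv hq hp heq hep hqr)
    have haux6 : ∀ v u w, D.label v = NLabel.Or → a (D.nvar v) = true → D.edge v u →
        D.edge v w → a (D.nvar u) = true → a (D.nvar w) = true → u ≠ w → D.Reach w u := by
      intro v u w hlv hv heu hew hu hw hne
      obtain ⟨i, hi⟩ := hwf.2.2.2.2.2.2.2 v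
      have hiw : i ∈ D.varsOf w := by rw [hsm v w hlv hew]; exact hi
      have hiu : i ∈ D.varsOf u := by rw [hsm v u hlv heu]; exact hi
      obtain ⟨t, s, hts, hdt⟩ := hdesc w hw hiw
      obtain ⟨P, hrl, _, _, hmem⟩ := NNF.aux_mkRL3 hrootM (hreach v hv) ⟨hew, hv, hw⟩ hdt hts
      have huroot : u ≠ D.root := fun h => NNF.aux_no_edge_to_root hwf (h ▸ heu)
      have huP := NNF.aux_key_hit hcov hamo hiu huroot hu hrl (fun y hy => (hmem y hy).1)
      rcases (hmem u huP).2 with h1 | h2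
      · exact absurd heu (fun he => NNF.aux_reach_edge_false hwf (NNF.aux_te_reach h1) he)
      · exact NNF.aux_te_reach h2
    refine ⟨hrootM, ?_, ?_, ?_, ?_, ?_⟩
    · exact fun v hv => hreach v hv
    · intro v hv hvr
      obtain ⟨p, hp, hpa⟩ := hN3 v hvr hv
      refine ⟨p, ⟨hp, hpa, hv⟩, ?_⟩
      intro q hq
      exact huniqpar v q p hv hq.1 hp hq.2.1 hpa
    · intro u hu
      exact NNF.aux_no_edge_to_root hwf hu.1
    · intro v hv hlv u he
      exact ⟨he, hv, hN2 v u hlv he hv⟩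
    · intro v hv hlv
      obtain ⟨u, hu, hua⟩ := hN1 v hlv hv
      refine ⟨u, ⟨hu, hv, hua⟩, ?_⟩
      intro w hw
      by_cases hwu : w = u
      · exact hwu
      · exfalso
        have h1 := haux6 v w u hlv hv hw.1 hu hw.2.2 hua hwu
        have h2 := haux6 v u w hlv hv hu hw.1 hua hw.2.2 (fun h => hwu h.symm)
        exact hwu (NNF.aux_reach_antisymm hwf h2 h1)
  -- Block B : MST ⇒ ψ_p
  have blockB : D.IsMST (D.induced {v | a (D.nvar v) = true}) → CNF.Sat a (D.psiP 𝒮) := by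
    intro hmst
    obtain ⟨hm1, hm2, hm3, hm4, hm5, hm6⟩ := hmst
    have hAnd : ∀ v ∈ ({v | a (D.nvar v) = true} : Set D.N), D.label v = NLabel.And →
        ∀ u, D.edge v u → u ∈ ({v | a (D.nvar v) = true} : Set D.N) :=
      fun v hv hl u he => (hm5 v hv hl u he).2.2
    have hOr : ∀ v ∈ ({v | a (D.nvar v) = true} : Set D.N), D.label v = NLabel.Or →
        ∃ u, D.edge v u ∧ u ∈ ({v | a (D.nvar v) = true} : Set D.N) := by
      intro v hv hl
      obtain ⟨u, hu, _⟩ := hm6 v hv hl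
      exact ⟨u, hu.1, hu.2.2⟩
    have hdesc := fun {i : Fin D.n} => NNF.aux_descend hwf hsm hAnd hOr (i := i)
    have hponce : ∀ (x y y' : D.N), D.auxTE {v | a (D.nvar v) = true} y x →
        D.auxTE {v | a (D.nvar v) = true} y' x → y = y' := by
      intro x y y' h h'
      have hxr : x ≠ D.root := fun hh => hm4 y (hh ▸ h)
      obtain ⟨z, hz, hzu⟩ := hm3 x h.2.2 hxr
      rw [hzu y h, hzu y' h']
    intro C hC
    simp only [NNF.psiP, NNF.grpN6, Set.mem_union] at hC
    rcases hC with (((((hC | hC) | hC) | hC) | (hC | hC)) | hC)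
    · obtain ⟨v, hlv, rfl⟩ := hC
      by_cases hav : a (D.nvar v) = true
      · obtain ⟨u, hu, _⟩ := hm6 v hav hlv
        exact ⟨posL (D.nvar u), Set.mem_insert_iff.2 (Or.inr ⟨u, hu.1, rfl⟩), hu.2.2⟩
      · exact ⟨negL (D.nvar v), Set.mem_insert _ _, Bool.eq_false_iff.2 hav⟩
    · obtain ⟨v, u, hlv, he, rfl⟩ := hC
      by_cases hav : a (D.nvar v) = true
      · exact ⟨posL (D.nvar u), Set.mem_insert_iff.2 (Or.inr rfl), (hm5 v hav hlv u he).2.2⟩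
      · exact ⟨negL (D.nvar v), Set.mem_insert _ _, Bool.eq_false_iff.2 hav⟩
    · obtain ⟨v, hvr, rfl⟩ := hC
      by_cases hav : a (D.nvar v) = true
      · obtain ⟨z, hz, _⟩ := hm3 v hav hvr
        exact ⟨posL (D.nvar z), Set.mem_insert_iff.2 (Or.inr ⟨z, hz.1, rfl⟩), hz.2.1⟩
      · exact ⟨negL (D.nvar v), Set.mem_insert _ _, Bool.eq_false_iff.2 hav⟩
    · obtain ⟨i, s, hsD, hno, rfl⟩ := hC
      refine ⟨negL (Sum.inl (i, s)), rfl, ?_⟩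
      rcases (Bool.eq_false_or_eq_true (a (Sum.inl (i, s)))).symm with h | h
      · exact h
      · exfalso
        obtain ⟨t, s', hts', hrt⟩ := hdesc D.root hm1 (NNF.aux_mem_varsOf_root hwf i)
        have htM : a (D.nvar t) = true := NNF.aux_te_reach_mem hm1 hrt
        rw [NNF.aux_nvar_leaf hts'] at htM
        obtain ⟨s0, _, huq⟩ := hdc i
        have h1 : s = s0 := huq s ⟨hsD, h⟩
        have h2 : s' = s0 := huq s' ⟨hwf.2.2.1 t i s' hts', htM⟩
        exact hno t (by rw [hts', h2, ← h1])
    · obtain ⟨i, S, hS, u, huS, w, hwS, hne, rfl⟩ := hC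
      by_cases hau : a (D.nvar u) = true
      · refine ⟨negL (D.nvar w), Set.mem_insert_iff.2 (Or.inr rfl), ?_⟩
        rcases (Bool.eq_false_or_eq_true (a (D.nvar w))).symm with h | h
        · exact h
        · exfalso
          have huH : i ∈ D.varsOf u := ((hcov i).1 S hS).1 huS
          have hwH : i ∈ D.varsOf w := ((hcov i).1 S hS).1 hwS
          obtain ⟨t, s, hts, hut⟩ := hdesc u hau huH
          obtain ⟨t', s', hts', hwt⟩ := hdesc w h hwH
          have ht : t = t' := NNF.aux_leaf_unique hwf hdc hts hts'
            (NNF.aux_te_reach_mem hau hut) (NNF.aux_te_reach_mem h hwt)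
          rw [← ht] at hwt
          rcases aux_comparable hponce hut hwt with hcmp | hcmp
          · obtain ⟨P, hrl, hup, hwp⟩ := NNF.aux_mkRL2 hm1 (hm2 u hau) hcmp hwt hts
            obtain ⟨z, _, hzu⟩ := ((hcov i).1 S hS).2 P hrl
            exact hne ((hzu u ⟨hup, huS⟩).trans (hzu w ⟨hwp, hwS⟩).symm)
          · obtain ⟨P, hrl, hwp, hup⟩ := NNF.aux_mkRL2 hm1 (hm2 w h) hcmp hut hts
            obtain ⟨z, _, hzu⟩ := ((hcov i).1 S hS).2 P hrl
            exact hne ((hzu u ⟨hup, huS⟩).trans (hzu w ⟨hwp, hwS⟩).symm)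
      · exact ⟨negL (D.nvar u), Set.mem_insert _ _, Bool.eq_false_iff.2 hau⟩
    · obtain ⟨i, S, hS, rfl⟩ := hC
      obtain ⟨t, s, hts, hrt⟩ := hdesc D.root hm1 (NNF.aux_mem_varsOf_root hwf i)
      obtain ⟨P, hrl, hmem⟩ := NNF.aux_mkRL1 hm1 hrt hts
      obtain ⟨z, ⟨hzP, hzS⟩, _⟩ := ((hcov i).1 S hS).2 P hrl
      exact ⟨posL (D.nvar z), ⟨z, hzS, rfl⟩, (hmem z hzP).1⟩
    · rcases hC with rfl
      exact ⟨posL (D.nvar D.root), rfl, hm1⟩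
  have hPC : CNF.Sat a (D.psiP 𝒮) → CNF.Sat a (D.psiC 𝒮) := by
    intro h C hC
    refine h C ?_
    simp only [NNF.psiC, NNF.psiP, NNF.grpN6, Set.mem_union] at hC ⊢
    tauto
  exact ⟨⟨fun m => hPC (blockB m), blockC⟩, ⟨fun hc => blockB (blockC hc), hPC⟩⟩
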